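/- Suppose y, z ∈ ℕ satisfy y ≥ 2, y ≥ z ≥ 1, a₁ − d ≥ C(y,2) + 1 (C(y,2) the binomial coefficient y choose 2), and ⌊ω_{a₁−1}/a₁⌋ = ⌊ω_z/a₁⌋ + ⌊ω₁/a₁⌋. Then for every i with z ≤ i ≤ y one has ⌊ω_i/a₁⌋ = ⌊ω_z/a₁⌋ = ⌊ω_y/a₁⌋, and Q + 1 = ⌊ω_z/a₁⌋ + ⌊ω₁/a₁⌋. -/
import Mathlib


lemma div_add_div_le' (n u v : ℕ) (hn : 0 < n) : u / n + v / n ≤ (u + v) / n := by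
  rw [Nat.le_div_iff_mul_le hn, add_mul]
  exact add_le_add (Nat.div_mul_le_self u n) (Nat.div_mul_le_self v n)

lemma sum_Icc_eq_choose (n : ℕ) : (∑ k ∈ Finset.Icc 1 n, k) = (n + 1).choose 2 := by
  induction n with
  | zero => simp
  | succ m ih =>
    rw [Finset.sum_Icc_succ_top (by omega : 1 ≤ m + 1), ih]
    have h := Nat.choose_succ_succ (m + 1) 1
    norm_num at h
    omega

lemma pair_count' (n : ℕ) :
    ((Finset.Icc 1 n ×ˢ Finset.Icc 1 n).filter fun p : ℕ × ℕ => p.1 ≤ p.2).card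
      = (n + 1).choose 2 := by
  have hset : ((Finset.Icc 1 n ×ˢ Finset.Icc 1 n).filter fun p : ℕ × ℕ => p.1 ≤ p.2)
      = (Finset.Icc 1 n).biUnion (fun k => (Finset.Icc 1 k).image (fun j => (j, k))) := by
    ext ⟨j, k⟩
    simp only [Finset.mem_filter, Finset.mem_product, Finset.mem_Icc, Finset.mem_biUnion,
      Finset.mem_image, Prod.mk.injEq]
    constructor
    · rintro ⟨⟨⟨h1, _⟩, ⟨h3, h4⟩⟩, h5⟩
      exact ⟨k, ⟨h3, h4⟩, j, ⟨h1, h5⟩, rfl, rfl⟩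
    · rintro ⟨k', ⟨hk1, hk2⟩, j', ⟨hj1, hj2⟩, rfl, rfl⟩
      omega
  rw [hset, Finset.card_biUnion]
  · have hc : ∀ k ∈ Finset.Icc 1 n, ((Finset.Icc 1 k).image (fun j => (j, k))).card = k := by
      intro k _
      rw [Finset.card_image_of_injective _ (fun x y h => ((Prod.mk.injEq _ _ _ _).mp h).1),
        Nat.card_Icc]
      omega
    rw [Finset.sum_congr rfl hc, sum_Icc_eq_choose]
  · intro x _ y _ hxy
    simp only [Finset.disjoint_left, Finset.mem_image]
    rintro a ⟨j, _, rfl⟩ ⟨j', _, h⟩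
    exact hxy (congrArg Prod.snd h).symm




theorem stmt16
    (d : ℕ) (hd : 2 ≤ d)
    (a : Fin d → ℕ)
    (ha_pos : ∀ i, 0 < a i)
    (ha_mono : StrictMono a)
    (ha_gcd : Finset.univ.gcd a = 1)
    (a1 : ℕ) (ha1 : a1 = a ⟨0, by omega⟩)
    (S : Set ℕ)
    (hS : S = {m : ℕ | ∃ c : Fin d → ℕ, m = ∑ i, c i * a i})
    (hmin : ∀ j : Fin d, ¬ ∃ c : Fin d → ℕ, c j = 0 ∧ a j = ∑ i, c i * a i)
    (F : ℕ) (hF : F ∉ S) (hFmax : ∀ m : ℕ, F < m → m ∈ S)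
    (ω : ℕ → ℕ)
    (hω_mono : ∀ i j : ℕ, i < j → j < a1 → ω i < ω j)
    (hω_range : ω '' Set.Iio a1 = {w ∈ S | ¬ ∃ s ∈ S, s + a1 = w})
    (Q R : ℕ) (hQR : F + 1 = Q * a1 + R) (hR2 : 2 ≤ R) (hRa : R ≤ a1)
    (y : ℕ) (hy : 2 ≤ y) (hyd : y.choose 2 + 1 ≤ a1 - d)
    (z : ℕ) (hz1 : 1 ≤ z) (hzy : z ≤ y)
    (hfloor : ω (a1 - 1) / a1 = ω z / a1 + ω 1 / a1)
    :
    (∀ i : ℕ, z ≤ i → i ≤ y → ω i / a1 = ω z / a1 ∧ ω i / a1 = ω y / a1) ∧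
      Q + 1 = ω z / a1 + ω 1 / a1 := by
  classical
  have ha1pos : 0 < a1 := ha1 ▸ ha_pos _
  -- semigroup basics
  have hS0 : (0 : ℕ) ∈ S := by
    rw [hS]; exact ⟨fun _ => 0, by simp⟩
  have hSadd : ∀ u v : ℕ, u ∈ S → v ∈ S → u + v ∈ S := by
    rw [hS]
    rintro u v ⟨cu, hu⟩ ⟨cv, hv⟩
    exact ⟨cu + cv, by simp [hu, hv, add_mul, Finset.sum_add_distrib]⟩
  have hSa : ∀ j : Fin d, a j ∈ S := by
    intro j
    rw [hS]
    refine ⟨fun i => if i = j then 1 else 0, ?_⟩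
    simp [ite_mul, Finset.sum_ite_eq']
  have hSa1 : a1 ∈ S := ha1 ▸ hSa _
  have hSmul : ∀ m : ℕ, m * a1 ∈ S := by
    intro m
    induction m with
    | zero => simpa using hS0
    | succ k ih => have := hSadd _ _ ih hSa1; rw [add_one_mul]; exact this
  -- Apery facts
  have hApω : ∀ i, i < a1 → ω i ∈ S ∧ ¬∃ s ∈ S, s + a1 = ω i := by
    intro i hi
    have h : ω i ∈ ω '' Set.Iio a1 := ⟨i, hi, rfl⟩
    rw [hω_range] at h
    exact h
  have hωAp : ∀ w, w ∈ S → (¬∃ s ∈ S, s + a1 = w) → ∃ i, i < a1 ∧ ω i = w := by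
    intro w h1 h2
    have h : w ∈ ω '' Set.Iio a1 := by rw [hω_range]; exact ⟨h1, h2⟩
    obtain ⟨i, hi, he⟩ := h
    exact ⟨i, hi, he⟩
  have hω0 : ω 0 = 0 := by
    obtain ⟨i, hi, he⟩ := hωAp 0 hS0 (by rintro ⟨s, _, he⟩; omega)
    rcases Nat.eq_zero_or_pos i with h | h
    · exact h ▸ he
    · have := hω_mono 0 i h hi; omega
  have hmono_le : ∀ i j : ℕ, i ≤ j → j < a1 → ω i ≤ ω j := by
    intro i j hij hj
    rcases eq_or_lt_of_le hij with h | h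
    · rw [h]
    · exact (hω_mono i j h hj).le
  have hωpos : ∀ i, 1 ≤ i → i < a1 → 0 < ω i := by
    intro i h1 h2
    have := hω_mono 0 i h1 h2; omega
  -- top of Apery set
  have htop : ω (a1 - 1) = F + a1 := by
    have hFa1S : F + a1 ∈ S := hFmax _ (by omega)
    have hFAp : ¬∃ s ∈ S, s + a1 = F + a1 := by
      rintro ⟨s, hs, he⟩
      have : s = F := by omega
      exact hF (this ▸ hs)
    obtain ⟨i, hi, he⟩ := hωAp _ hFa1S hFAp
    rcases eq_or_lt_of_le (by omega : i ≤ a1 - 1) with h | h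
    · rw [← h]; exact he
    · exfalso
      have hlt : F + a1 < ω (a1 - 1) := he ▸ hω_mono i (a1 - 1) h (by omega)
      have htS : ω (a1 - 1) - a1 ∈ S := hFmax _ (by omega)
      exact (hApω (a1 - 1) (by omega)).2 ⟨ω (a1 - 1) - a1, htS, by omega⟩
  have hQtop : ω (a1 - 1) / a1 = Q + 1 := by
    rw [htop]
    have e1 : F + a1 = a1 * (Q + 1) + (R - 1) := by
      have : a1 * (Q + 1) = Q * a1 + a1 := by ring
      omega
    rw [e1, Nat.mul_add_div ha1pos, Nat.div_eq_of_lt (by omega)]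
  have hB : Q + 1 = ω z / a1 + ω 1 / a1 := by rw [← hfloor]; exact hQtop.symm
  -- y is small
  have hychoose : y - 1 ≤ y.choose 2 := by
    rw [Nat.choose_two_right]
    calc y - 1 = 2 * (y - 1) / 2 := by omega
    _ ≤ y * (y - 1) / 2 := Nat.div_le_div_right (Nat.mul_le_mul_right _ hy)
  have hya1 : y + 2 ≤ a1 := by omega
  -- main inequality
  have hkey : ω y / a1 ≤ ω z / a1 := by
    by_contra hlt
    push_neg at hlt
    set P : ℕ → Prop := fun i => ∃ u v : ℕ, u ∈ S ∧ v ∈ S ∧ 0 < u ∧ 0 < v ∧ ω i = u + v with hP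
    set G : Finset ℕ := (Finset.Ico 1 a1).filter P with hG
    set Bs : Finset ℕ := (Finset.Ico 1 a1).filter (fun i => ¬ P i) with hBs
    set PP : Finset (ℕ × ℕ) :=
      (Finset.Icc 1 (y - 1) ×ˢ Finset.Icc 1 (y - 1)).filter (fun p => p.1 ≤ p.2) with hPP
    -- reduction modulo a1
    have red : ∀ s : ℕ, s ∈ S → ∃ j m : ℕ, j < a1 ∧ s = ω j + m * a1 := by
      intro s
      induction s using Nat.strong_induction_on with
      | _ s ih =>
        intro hs
        by_cases h : ∃ t ∈ S, t + a1 = s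
        · obtain ⟨t, ht, he⟩ := h
          obtain ⟨j, m, hj, he2⟩ := ih t (by omega) ht
          refine ⟨j, m + 1, hj, ?_⟩
          have : (m + 1) * a1 = m * a1 + a1 := by ring
          omega
        · obtain ⟨j, hj, he⟩ := hωAp s hs h
          exact ⟨j, 0, hj, by omega⟩
    -- every i in G decomposes with small indices
    have hdec : ∀ i : ℕ, ∃ p : ℕ × ℕ, i ∈ G → (p ∈ PP ∧ ω i = ω p.1 + ω p.2) := by
      intro i
      by_cases hiG : i ∈ G
      swap
      · exact ⟨(0, 0), fun h => absurd h hiG⟩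
      obtain ⟨hiIco, u, v, hu, hv, hupos, hvpos, he⟩ := Finset.mem_filter.mp hiG
      have hi1 : 1 ≤ i := (Finset.mem_Ico.mp hiIco).1
      have hia : i < a1 := (Finset.mem_Ico.mp hiIco).2
      obtain ⟨j, m, hj, hej⟩ := red u hu
      obtain ⟨k, n, hk, hek⟩ := red v hv
      have hsum0 : m + n = 0 := by
        by_contra hmn
        have h1 : ω j + ω k + (m + n - 1) * a1 ∈ S :=
          hSadd _ _ (hSadd _ _ (hApω j hj).1 (hApω k hk).1) (hSmul _)
        refine (hApω i hia).2 ⟨_, h1, ?_⟩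
        have e1 : (m + n - 1) * a1 + a1 = m * a1 + n * a1 := by
          have e2 : m + n - 1 + 1 = m + n := by omega
          have e3 : (m + n - 1 + 1) * a1 = (m + n - 1) * a1 + a1 := by ring
          have e4 : (m + n) * a1 = m * a1 + n * a1 := by ring
          rw [e2] at e3
          omega
        omega
      have hm0 : m = 0 := by omega
      have hn0 : n = 0 := by omega
      have heu : u = ω j := by rw [hej, hm0]; ring
      have hev : v = ω k := by rw [hek, hn0]; ring
      have hj1 : 1 ≤ j := by
        rcases Nat.eq_zero_or_pos j with h | h
        · rw [h, hω0] at heu; omega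
        · exact h
      have hk1 : 1 ≤ k := by
        rcases Nat.eq_zero_or_pos k with h | h
        · rw [h, hω0] at hev; omega
        · exact h
      have hei : ω i = ω j + ω k := by rw [he, heu, hev]
      -- bound the indices
      have hbound : ∀ j' k' : ℕ, 1 ≤ j' → j' < a1 → 1 ≤ k' → k' < a1 →
          ω i = ω j' + ω k' → k' ≤ y - 1 := by
        intro j' k' hj'1 hj'a hk'1 hk'a he'
        by_contra hky
        have hyk : y ≤ k' := by omega
        have c1 : ω 1 / a1 + ω y / a1 ≤ ω i / a1 := by
          calc ω 1 / a1 + ω y / a1 ≤ ω j' / a1 + ω k' / a1 :=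
                add_le_add (Nat.div_le_div_right (hmono_le 1 j' hj'1 hj'a))
                  (Nat.div_le_div_right (hmono_le y k' hyk hk'a))
          _ ≤ (ω j' + ω k') / a1 := div_add_div_le' a1 _ _ ha1pos
          _ = ω i / a1 := by rw [he']
        have c2 : ω i / a1 ≤ Q + 1 := by
          rw [← hQtop]
          exact Nat.div_le_div_right (hmono_le i (a1 - 1) (by omega) (by omega))
        omega
      have hky : k ≤ y - 1 := hbound j k hj1 hj hk1 hk hei
      have hjy : j ≤ y - 1 := hbound k j hk1 hk hj1 hj (by omega)
      rcases le_total j k with h | h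
      · refine ⟨(j, k), fun _ => ⟨?_, hei⟩⟩
        simp only [hPP, Finset.mem_filter, Finset.mem_product, Finset.mem_Icc]
        exact ⟨⟨⟨hj1, hjy⟩, ⟨hk1, hky⟩⟩, h⟩
      · refine ⟨(k, j), fun _ => ⟨?_, ?_⟩⟩
        · simp only [hPP, Finset.mem_filter, Finset.mem_product, Finset.mem_Icc]
          exact ⟨⟨⟨hk1, hky⟩, ⟨hj1, hjy⟩⟩, h⟩
        · show ω i = ω k + ω j
          omega
    choose f hf using hdec
    have hGcard : G.card ≤ PP.card := by
      refine Finset.card_le_card_of_injOn f (fun i hi => (hf i hi).1) ?_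
      intro i hi i' hi' hee
      have e1 := (hf i (Finset.mem_coe.mp hi)).2
      have e2 := (hf i' (Finset.mem_coe.mp hi')).2
      rw [hee] at e1
      have he : ω i = ω i' := by omega
      have hia : i < a1 :=
        (Finset.mem_Ico.mp (Finset.mem_filter.mp (Finset.mem_coe.mp hi)).1).2
      have hia' : i' < a1 :=
        (Finset.mem_Ico.mp (Finset.mem_filter.mp (Finset.mem_coe.mp hi')).1).2
      rcases lt_trichotomy i i' with h | h | h
      · have := hω_mono i i' h hia'; omega
      · exact h
      · have := hω_mono i' i h hia; omega
    -- bound on Bs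
    have z0 : Fin d := ⟨0, by omega⟩
    have hgen : ∀ i : ℕ, ∃ j : Fin d, i ∈ Bs → (j ≠ ⟨0, by omega⟩ ∧ ω i = a j) := by
      intro i
      by_cases hiB : i ∈ Bs
      swap
      · exact ⟨⟨0, by omega⟩, fun h => absurd h hiB⟩
      obtain ⟨hiIco, hnP⟩ := Finset.mem_filter.mp hiB
      have hi1 : 1 ≤ i := (Finset.mem_Ico.mp hiIco).1
      have hia : i < a1 := (Finset.mem_Ico.mp hiIco).2
      have hωS : ω i ∈ S := (hApω i hia).1
      rw [hS] at hωS
      obtain ⟨c, hc⟩ := hωS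
      have hωpos' : 0 < ω i := hωpos i hi1 hia
      have hct : ∃ t, c t ≠ 0 := by
        by_contra h
        push_neg at h
        rw [hc] at hωpos'
        simp [h] at hωpos'
      obtain ⟨t, hct⟩ := hct
      have hsplit : ω i = a t + ((c t - 1) * a t + ∑ s ∈ Finset.univ.erase t, c s * a s) := by
        rw [hc, ← Finset.add_sum_erase _ _ (Finset.mem_univ t)]
        have : c t * a t = a t + (c t - 1) * a t := by
          obtain ⟨w, hw⟩ : ∃ w, c t = w + 1 := ⟨c t - 1, by omega⟩
          rw [hw, Nat.add_sub_cancel]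
          ring
        omega
      have hvS : (c t - 1) * a t + ∑ s ∈ Finset.univ.erase t, c s * a s ∈ S := by
        rw [hS]
        refine ⟨Function.update c t (c t - 1), ?_⟩
        rw [← Finset.add_sum_erase _ _ (Finset.mem_univ t)]
        congr 1
        · simp [Function.update]
        · refine Finset.sum_congr rfl fun s hs => ?_
          rw [Function.update_of_ne (Finset.mem_erase.mp hs).1]
      have hv0 : (c t - 1) * a t + ∑ s ∈ Finset.univ.erase t, c s * a s = 0 := by
        by_contra hpos
        exact hnP ⟨a t, _, hSa t, hvS, ha_pos t, Nat.pos_of_ne_zero hpos, hsplit⟩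
      have hωat : ω i = a t := by omega
      have htne : t ≠ (⟨0, by omega⟩ : Fin d) := by
        intro h
        have : a t = a1 := by rw [h, ha1]
        exact (hApω i hia).2 ⟨0, hS0, by omega⟩
      exact ⟨t, fun _ => ⟨htne, hωat⟩⟩
    choose g hg using hgen
    have hBcard : Bs.card ≤ d - 1 := by
      have h1 : Bs.card ≤ (Finset.univ.erase (⟨0, by omega⟩ : Fin d)).card := by
        refine Finset.card_le_card_of_injOn g
          (fun i hi => Finset.mem_erase.2 ⟨(hg i hi).1, Finset.mem_univ _⟩) ?_
        intro i hi i' hi' hee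
        have e1 := (hg i (Finset.mem_coe.mp hi)).2
        have e2 := (hg i' (Finset.mem_coe.mp hi')).2
        rw [hee] at e1
        have he : ω i = ω i' := by omega
        have hia : i < a1 :=
          (Finset.mem_Ico.mp (Finset.mem_filter.mp (Finset.mem_coe.mp hi)).1).2
        have hia' : i' < a1 :=
          (Finset.mem_Ico.mp (Finset.mem_filter.mp (Finset.mem_coe.mp hi')).1).2
        rcases lt_trichotomy i i' with h | h | h
        · have := hω_mono i i' h hia'; omega
        · exact h
        · have := hω_mono i' i h hia; omega
      rwa [Finset.card_erase_of_mem (Finset.mem_univ _), Finset.card_univ, Fintype.card_fin] at h1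
    have hsplitc : G.card + Bs.card = a1 - 1 := by
      rw [hG, hBs, Finset.card_filter_add_card_filter_not, Nat.card_Ico]
    have hPPcard : PP.card = y.choose 2 := by
      have := pair_count' (y - 1)
      rw [hPP]
      rw [this]
      congr 1
      omega
    omega
  -- conclude
  have hzy' : ω z / a1 ≤ ω y / a1 := Nat.div_le_div_right (hmono_le z y hzy (by omega))
  refine ⟨fun i hzi hiy => ?_, hB⟩
  have h1 : ω z / a1 ≤ ω i / a1 := Nat.div_le_div_right (hmono_le z i hzi (by omega))
  have h2 : ω i / a1 ≤ ω y / a1 := Nat.div_le_div_right (hmono_le i y hiy (by omega))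
  omega
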